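/- Writing η ∈ Ω_{<∞} in run-length form η = 0^{m_0} 1^{n_1} 0^{m_1} ⋯ 0^{m_{l-1}} 1^{n_l} 0^{∞} with n_1,…,n_l ≥ 1 and m_1,…,m_{l-1} ≥ 1, the 10-elimination removes exactly one symbol from each interior run: Φ_1(η) = 0^{m_0} 1^{n_1−1} 0^{m_1−1} ⋯ 0^{m_{l-1}−1} 1^{n_l−1} 0^{∞}. -/

import Mathlib

/-- Seat occupation functions 𝒲_k(η,x). -/
def seatW (η : ℕ → ℤ) : ℕ → ℕ → ℤ
  | 0, _ => 0
  | x + 1, k =>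
      seatW η x k
        + η (x + 1) * (1 - seatW η x k) * (∏ m ∈ Finset.Ico 1 k, seatW η x m)
        - (1 - η (x + 1)) * seatW η x k * (∏ m ∈ Finset.Ico 1 k, (1 - seatW η x m))

/-- Boarding indicator η↑_k(x). -/
def seatUp (η : ℕ → ℤ) (k x : ℕ) : ℤ :=
  η x * (1 - seatW η (x - 1) k) * (∏ m ∈ Finset.Ico 1 k, seatW η (x - 1) m)

/-- Alighting indicator η↓_k(x). -/
def seatDown (η : ℕ → ℤ) (k x : ℕ) : ℤ :=
  (1 - η x) * seatW η (x - 1) k * (∏ m ∈ Finset.Ico 1 k, (1 - seatW η (x - 1) m))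

/-- Record indicator r(η,x). (Seat events at x have seat number ≤ x.) -/
def recordInd (η : ℕ → ℤ) (x : ℕ) : ℤ :=
  1 - ∑ k ∈ Finset.Icc 1 x, (seatUp η k x + seatDown η k x)

/-- ξ_k(η,x). -/
def xiSeat (η : ℕ → ℤ) (k x : ℕ) : ℤ :=
  (x : ℤ) - ∑ y ∈ Finset.Icc 1 x, ∑ m ∈ Finset.Icc 1 k, (seatUp η m y + seatDown η m y)

/-- s_k(η,i). -/
noncomputable def sSeat (η : ℕ → ℤ) (k i : ℕ) : ℕ :=
  sInf {x : ℕ | xiSeat η k x = (i : ℤ)}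

/-- k-skip map Ψ_k. -/
noncomputable def skip (η : ℕ → ℤ) (k : ℕ) : ℕ → ℤ := fun x => η (sSeat η k x)

/-- Slot decomposition ζ_k(η,i). -/
noncomputable def zeta (η : ℕ → ℤ) (k i : ℕ) : ℤ :=
  ∑ y ∈ Finset.Icc (sSeat η k i + 1) (sSeat η k (i + 1)),
    (seatUp η k y - seatUp η (k + 1) y)

/-- Carrier with capacity ℓ. -/
def carrier (η : ℕ → ℤ) (ℓ : ℕ) : ℕ → ℤ
  | 0 => 0
  | x + 1 =>
      if η (x + 1) = 1 ∧ carrier η ℓ x < (ℓ : ℤ) then carrier η ℓ x + 1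
      else if η (x + 1) = 0 ∧ 0 < carrier η ℓ x then carrier η ℓ x - 1
      else carrier η ℓ x

/-- Carrier with infinite capacity. -/
def carrierInf (η : ℕ → ℤ) : ℕ → ℤ
  | 0 => 0
  | x + 1 => if η (x + 1) = 1 then carrierInf η x + 1 else max (carrierInf η x - 1) 0

/-- One-step BBS(ℓ) evolution. -/
def tEvol (η : ℕ → ℤ) (ℓ : ℕ) : ℕ → ℤ :=
  fun x => η x + carrier η ℓ (x - 1) - carrier η ℓ x

/-- One-step BBS(∞) evolution. -/
def tEvolInf (η : ℕ → ℤ) : ℕ → ℤ :=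
  fun x => η x + carrierInf η (x - 1) - carrierInf η x

/-- A position survives the simultaneous elimination of all '10' patterns iff it is
neither the '1' of a '10' pair nor the '0' of a '10' pair (with the convention
η(-1) = η(0) = 0, truncated subtraction handles x = 0). -/
def survives10 (η : ℕ → ℤ) (x : ℕ) : Prop :=
  ¬(η x = 1 ∧ η (x + 1) = 0) ∧ ¬(η (x - 1) = 1 ∧ η x = 0)

/-- The 10-elimination Φ₁: the i-th symbol of Φ₁(η) is the symbol of η at the
i-th surviving position. -/
noncomputable def phi1 (η : ℕ → ℤ) : ℕ → ℤ := fun i => η (Nat.nth (survives10 η) i)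

/-- The finite word 0^{m₀} 1^{n 0} 0^{m 0} 1^{n 1} 0^{m 1} ⋯ 1^{n (l-1)};
the trailing infinite run of 0s is obtained by the default value in getD. -/
def runWord (m0 l : ℕ) (n m : ℕ → ℕ) : List ℤ :=
  List.replicate m0 0 ++
    ((List.range (l - 1)).flatMap fun i => List.replicate (n i) 1 ++ List.replicate (m i) 0)
      ++ List.replicate (n (l - 1)) 1

/-- the 10-elimination removes exactly one symbol from each interior run:
Φ₁(0^{m₀} 1^{n₁} 0^{m₁} ⋯ 0^{m_{l-1}} 1^{n_l} 0^∞)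
  = 0^{m₀} 1^{n₁−1} 0^{m₁−1} ⋯ 0^{m_{l-1}−1} 1^{n_l−1} 0^∞. -/
lemma nth_eq_of_strictMono (p : ℕ → Prop) (σ : ℕ → ℕ) (hmono : StrictMono σ)
    (hp : ∀ i, p (σ i)) (hsurj : ∀ x, p x → ∃ i, σ i = x) : ∀ i, Nat.nth p i = σ i := by
  intro i
  induction i using Nat.strong_induction_on with
  | _ i ih =>
    rw [Nat.nth_eq_sInf]
    have hmem : σ i ∈ {x | p x ∧ ∀ k < i, Nat.nth p k < x} := by
      refine ⟨hp i, fun k hk => ?_⟩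
      rw [ih k hk]; exact hmono hk
    refine le_antisymm (Nat.sInf_le hmem) (le_csInf ⟨_, hmem⟩ ?_)
    rintro x ⟨hx, hlt⟩
    obtain ⟨j, rfl⟩ := hsurj x hx
    by_contra h
    push_neg at h
    have hj : j < i := by
      by_contra hj
      exact absurd (hmono.monotone (not_lt.mp hj)) (not_le.mpr h)
    have := hlt j hj
    rw [ih j hj] at this
    exact lt_irrefl _ this

section step
variable (η : ℕ → ℤ) (a b c : ℕ)

lemma step_shift (hc : 1 ≤ c)
    (h2 : ∀ x, a + b ≤ x → x < a + b + c → η x = 0) :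
    ∀ y, survives10 η (a + b + c + y) ↔ survives10 (fun z => η (a + b + c + z)) y := by
  intro y
  unfold survives10
  rcases Nat.eq_zero_or_pos y with rfl | hy
  · simp only [Nat.add_zero, Nat.zero_sub]
    have ht : η (a + b + c - 1) = 0 := h2 _ (by omega) (by omega)
    constructor
    · rintro ⟨hA, _⟩
      exact ⟨by simpa using hA, by omega⟩
    · rintro ⟨hA, _⟩
      refine ⟨by simpa using hA, ?_⟩
      rintro ⟨h1, _⟩
      omega
  · have e1 : a + b + c + y - 1 = a + b + c + (y - 1) := by omega
    have e2 : a + b + c + y + 1 = a + b + c + (y + 1) := by omega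
    rw [e1, e2]

lemma step_char (hb : 1 ≤ b) (hc : 1 ≤ c) (h0 : ∀ x < a, η x = 0)
    (h1 : ∀ x, a ≤ x → x < a + b → η x = 1)
    (h2 : ∀ x, a + b ≤ x → x < a + b + c → η x = 0) :
    ∀ x < a + b + c, (survives10 η x ↔ (x ≠ a + b - 1 ∧ x ≠ a + b)) := by
  intro x hxt
  unfold survives10
  constructor
  · rintro ⟨hA, hB⟩
    refine ⟨?_, ?_⟩
    · rintro rfl
      exact hA ⟨h1 _ (by omega) (by omega), h2 _ (by omega) (by omega)⟩
    · rintro rfl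
      exact hB ⟨h1 _ (by omega) (by omega), h2 _ le_rfl (by omega)⟩
  · rintro ⟨hne1, hne2⟩
    constructor
    · rintro ⟨hx1, hx0⟩
      have c1 : ¬ x < a := fun h => by have := h0 x h; omega
      have c2 : ¬ (a + b ≤ x ∧ x < a + b + c) := fun h => by have := h2 x h.1 h.2; omega
      have c3 : ¬ (a ≤ x + 1 ∧ x + 1 < a + b) := fun h => by have := h1 _ h.1 h.2; omega
      have c4 : x + 1 ≤ a + b + c := by omega
      rcases Nat.lt_or_ge (x + 1) a with h | h
      · have := h0 _ h; omega
      · rcases Nat.lt_or_ge (x + 1) (a + b) with h' | h'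
        · omega
        · rcases Nat.lt_or_ge (x + 1) (a + b + c) with h'' | h''
          · have := h2 _ h' h''; omega
          · omega
    · rintro ⟨hp1, hx0⟩
      rcases Nat.eq_zero_or_pos x with rfl | hx
      · simp at hp1 hx0; omega
      · have c1 : ¬ x - 1 < a := fun h => by have := h0 _ h; omega
        have c2 : ¬ (a + b ≤ x - 1) := fun h => by have := h2 _ h (by omega); omega
        have c3 : ¬ (a ≤ x ∧ x < a + b) := fun h => by have := h1 _ h.1 h.2; omega
        have c4 : ¬ (a + b ≤ x ∧ x < a + b + c) := fun h => by have := h2 _ h.1 h.2; omega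
        omega

lemma nth_step (hb : 1 ≤ b) (hc : 1 ≤ c) (h0 : ∀ x < a, η x = 0)
    (h1 : ∀ x, a ≤ x → x < a + b → η x = 1)
    (h2 : ∀ x, a + b ≤ x → x < a + b + c → η x = 0)
    (hinf : (setOf (survives10 (fun z => η (a + b + c + z)))).Infinite) :
    ∀ j, Nat.nth (survives10 η) j =
      if j < a + b - 1 then j
      else if j < a + b + c - 2 then j + 2
      else a + b + c + Nat.nth (survives10 (fun z => η (a + b + c + z))) (j - (a + b + c - 2)) := by
  have hchar := step_char η a b c hb hc h0 h1 h2
  have hshift := step_shift η a b c hc h2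
  apply nth_eq_of_strictMono
  · intro i j hij
    simp only
    have hle : ∀ k, a + b + c ≤ a + b + c + Nat.nth (survives10 (fun z => η (a + b + c + z))) k :=
      fun k => Nat.le_add_right _ _
    split_ifs with h1' h2' h3' h4' h5' h6' h7' <;>
      first
        | omega
        | (exact lt_of_lt_of_le (by omega) (hle _))
        | (have := (Nat.nth_lt_nth hinf (k := i - (a + b + c - 2))
              (n := j - (a + b + c - 2))).mpr (by omega)
           omega)
  · intro i
    beta_reduce
    split_ifs with h1' h2'
    · rw [hchar i (by omega)]; omega
    · rw [hchar (i + 2) (by omega)]; omega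
    · rw [hshift]
      exact Nat.nth_mem_of_infinite hinf _
  · intro x hx
    rcases Nat.lt_or_ge x (a + b + c) with h | h
    · rw [hchar x h] at hx
      rcases Nat.lt_or_ge x (a + b - 1) with h' | h'
      · exact ⟨x, by simp [h']⟩
      · refine ⟨x - 2, ?_⟩
        rw [if_neg (by omega), if_pos (by omega)]
        omega
    · have hy : survives10 (fun z => η (a + b + c + z)) (x - (a + b + c)) := by
        rw [← hshift]
        have e : a + b + c + (x - (a + b + c)) = x := by omega
        rwa [e]
      have hmem : x - (a + b + c) ∈ Set.range (Nat.nth (survives10 (fun z => η (a + b + c + z)))) := by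
        rw [Nat.range_nth_of_infinite hinf]; exact hy
      obtain ⟨j, hj⟩ := hmem
      refine ⟨a + b + c - 2 + j, ?_⟩
      rw [if_neg (by omega), if_neg (by omega)]
      have e : a + b + c - 2 + j - (a + b + c - 2) = j := by omega
      rw [e, hj]
      omega
end step

section base
variable (η : ℕ → ℤ) (a b : ℕ)

lemma base_char (hb : 1 ≤ b) (h0 : ∀ x < a, η x = 0)
    (h1 : ∀ x, a ≤ x → x < a + b → η x = 1) (h2 : ∀ x, a + b ≤ x → η x = 0) :
    ∀ x, survives10 η x ↔ (x ≠ a + b - 1 ∧ x ≠ a + b) := by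
  intro x
  unfold survives10
  constructor
  · rintro ⟨hA, hB⟩
    refine ⟨?_, ?_⟩
    · rintro rfl
      exact hA ⟨h1 _ (by omega) (by omega), h2 _ (by omega)⟩
    · rintro rfl
      exact hB ⟨h1 _ (by omega) (by omega), h2 _ le_rfl⟩
  · rintro ⟨hne1, hne2⟩
    constructor
    · rintro ⟨hx1, hx0⟩
      have c1 : ¬ x < a := fun h => by have := h0 x h; omega
      have c2 : ¬ a + b ≤ x := fun h => by have := h2 x h; omega
      have c3 : ¬ (a ≤ x + 1 ∧ x + 1 < a + b) := fun h => by
        have := h1 _ h.1 h.2; omega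
      omega
    · rintro ⟨hp1, hx0⟩
      rcases Nat.eq_zero_or_pos x with rfl | hx
      · simp at hp1 hx0; omega
      · have c1 : ¬ x - 1 < a := fun h => by have := h0 _ h; omega
        have c2 : ¬ a + b ≤ x - 1 := fun h => by have := h2 _ h; omega
        have c3 : ¬ (a ≤ x ∧ x < a + b) := fun h => by have := h1 _ h.1 h.2; omega
        omega

lemma nth_base (hb : 1 ≤ b) (h0 : ∀ x < a, η x = 0)
    (h1 : ∀ x, a ≤ x → x < a + b → η x = 1) (h2 : ∀ x, a + b ≤ x → η x = 0) :
    ∀ j, Nat.nth (survives10 η) j = if j < a + b - 1 then j else j + 2 := by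
  have hc := base_char η a b hb h0 h1 h2
  apply nth_eq_of_strictMono
  · intro i j hij
    simp only
    split <;> split <;> omega
  · intro i
    rw [hc]
    split <;> omega
  · intro x hx
    rw [hc] at hx
    rcases Nat.lt_or_ge x (a + b - 1) with h | h
    · exact ⟨x, by simp [h]⟩
    · exact ⟨x - 2, by rw [if_neg (by omega)]; omega⟩
end base

lemma survives_infinite (w : List ℤ) :
    (setOf (survives10 (fun x => w.getD x 0))).Infinite := by
  apply Set.infinite_of_injective_forall_mem (f := fun k : ℕ => w.length + 1 + k)
  · intro i j hij
    simpa using hij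
  · intro k
    have h1 : w.getD (w.length + 1 + k) 0 = 0 := List.getD_eq_default _ _ (by omega)
    have h2 : w.getD (w.length + 1 + k - 1) 0 = 0 := List.getD_eq_default _ _ (by omega)
    refine Set.mem_setOf.mpr ?_
    unfold survives10
    beta_reduce
    exact ⟨fun h => by omega, fun h => by omega⟩

lemma getD_rep (k x : ℕ) (z : ℤ) (hx : x < k) : (List.replicate k z).getD x 0 = z := by
  rw [List.getD_eq_getElem _ _ (by simpa using hx), List.getElem_replicate]

lemma getD_rep_lt (k x : ℕ) (z : ℤ) (tl : List ℤ) (hx : x < k) :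
    (List.replicate k z ++ tl).getD x 0 = z := by
  rw [List.getD_append _ _ _ _ (by simpa using hx), getD_rep _ _ _ hx]

lemma getD_rep_ge (k x : ℕ) (z : ℤ) (tl : List ℤ) (hx : k ≤ x) :
    (List.replicate k z ++ tl).getD x 0 = tl.getD (x - k) 0 := by
  rw [List.getD_append_right _ _ _ _ (by simpa using hx), List.length_replicate]

lemma runWord_one (m0 : ℕ) (n m : ℕ → ℕ) :
    runWord m0 1 n m = List.replicate m0 0 ++ List.replicate (n 0) 1 := by
  simp [runWord]

lemma runWord_succ (m0 l : ℕ) (hl : 1 ≤ l) (n m : ℕ → ℕ) :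
    runWord m0 (l + 1) n m = List.replicate m0 0 ++ (List.replicate (n 0) 1 ++
      (List.replicate (m 0) 0 ++ runWord 0 l (fun i => n (i + 1)) (fun i => m (i + 1)))) := by
  obtain ⟨k, rfl⟩ := Nat.exists_eq_add_of_le hl
  rw [Nat.add_comm 1 k]
  simp [runWord, List.range_succ_eq_map, List.flatMap_cons, List.flatMap_map, Function.comp,
    List.append_assoc, Nat.succ_eq_add_one]

lemma phi1_run_aux : ∀ l, 1 ≤ l → ∀ (m0 : ℕ) (n m : ℕ → ℕ), (∀ i < l, 1 ≤ n i) →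
    (∀ i < l - 1, 1 ≤ m i) →
    phi1 (fun x => (runWord m0 l n m).getD x 0)
      = fun j => (runWord m0 l (fun i => n i - 1) (fun i => m i - 1)).getD j 0 := by
  intro l
  induction l with
  | zero => omega
  | succ l ih =>
    intro _ m0 n m hn hm
    rcases Nat.eq_zero_or_pos l with rfl | hl
    · -- base case: l + 1 = 1
      have hb : 1 ≤ n 0 := hn 0 (by omega)
      set η : ℕ → ℤ := fun x => (runWord m0 1 n m).getD x 0 with hη
      have h0 : ∀ x < m0, η x = 0 := by
        intro x hx
        simp only [hη, runWord_one]
        exact getD_rep_lt _ _ _ _ hx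
      have h1 : ∀ x, m0 ≤ x → x < m0 + n 0 → η x = 1 := by
        intro x hx hx'
        simp only [hη, runWord_one]
        rw [getD_rep_ge _ _ _ _ hx]
        exact getD_rep _ _ _ (by omega)
      have h2 : ∀ x, m0 + n 0 ≤ x → η x = 0 := by
        intro x hx
        simp only [hη, runWord_one]
        exact List.getD_eq_default _ _ (by simp; omega)
      have hnth := nth_base η m0 (n 0) hb h0 h1 h2
      funext j
      show η (Nat.nth (survives10 η) j) = _
      rw [hnth j, runWord_one]
      split_ifs with hj
      · rcases Nat.lt_or_ge j m0 with h | h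
        · rw [h0 j h, getD_rep_lt _ _ _ _ h]
        · rw [h1 j h (by omega), getD_rep_ge _ _ _ _ h, getD_rep _ _ _ (by omega)]
      · rw [h2 (j + 2) (by omega)]
        rw [List.getD_eq_default _ _ (by simp; omega)]
    · -- step case: l ≥ 1
      have hb : 1 ≤ n 0 := hn 0 (by omega)
      have hc : 1 ≤ m 0 := hm 0 (by omega)
      set rest : List ℤ := runWord 0 l (fun i => n (i + 1)) (fun i => m (i + 1)) with hrest
      have hdec : runWord m0 (l + 1) n m = List.replicate m0 0 ++ (List.replicate (n 0) 1 ++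
          (List.replicate (m 0) 0 ++ rest)) := runWord_succ m0 l hl n m
      set η : ℕ → ℤ := fun x => (runWord m0 (l + 1) n m).getD x 0 with hη
      have h0 : ∀ x < m0, η x = 0 := by
        intro x hx
        simp only [hη, hdec]
        exact getD_rep_lt _ _ _ _ hx
      have h1 : ∀ x, m0 ≤ x → x < m0 + n 0 → η x = 1 := by
        intro x hx hx'
        simp only [hη, hdec]
        rw [getD_rep_ge _ _ _ _ hx]
        exact getD_rep_lt _ _ _ _ (by omega)
      have h2 : ∀ x, m0 + n 0 ≤ x → x < m0 + n 0 + m 0 → η x = 0 := by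
        intro x hx hx'
        simp only [hη, hdec]
        rw [getD_rep_ge _ _ _ _ (by omega), getD_rep_ge _ _ _ _ (by omega)]
        exact getD_rep_lt _ _ _ _ (by omega)
      have hsh : ∀ z, η (m0 + n 0 + m 0 + z) = rest.getD z 0 := by
        intro z
        simp only [hη, hdec]
        rw [getD_rep_ge _ _ _ _ (by omega), getD_rep_ge _ _ _ _ (by omega),
          getD_rep_ge _ _ _ _ (by omega)]
        congr 1
        omega
      have heta : (fun z => η (m0 + n 0 + m 0 + z)) = (fun x => rest.getD x 0) :=
        funext hsh
      have hinf : (setOf (survives10 (fun z => η (m0 + n 0 + m 0 + z)))).Infinite := by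
        rw [heta]; exact survives_infinite rest
      have hnth := nth_step η m0 (n 0) (m 0) hb hc h0 h1 h2 hinf
      have IH := ih hl 0 (fun i => n (i + 1)) (fun i => m (i + 1))
        (fun i hi => hn (i + 1) (by omega)) (fun i hi => hm (i + 1) (by omega))
      have hdec' : runWord m0 (l + 1) (fun i => n i - 1) (fun i => m i - 1) =
          List.replicate m0 0 ++ (List.replicate (n 0 - 1) 1 ++
          (List.replicate (m 0 - 1) 0 ++
            runWord 0 l (fun i => n (i + 1) - 1) (fun i => m (i + 1) - 1))) :=
        runWord_succ m0 l hl _ _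
      funext j
      show η (Nat.nth (survives10 η) j) = _
      rw [hnth j, hdec']
      split_ifs with hj hj'
      · rcases Nat.lt_or_ge j m0 with h | h
        · rw [h0 j h, getD_rep_lt _ _ _ _ h]
        · rw [h1 j h (by omega), getD_rep_ge _ _ _ _ h, getD_rep_lt _ _ _ _ (by omega)]
      · rw [h2 (j + 2) (by omega) (by omega), getD_rep_ge _ _ _ _ (by omega),
          getD_rep_ge _ _ _ _ (by omega)]
        rw [getD_rep_lt _ _ _ _ (by omega)]
      · rw [heta, hsh]
        have hIHj := congrFun IH (j - (m0 + n 0 + m 0 - 2))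
        simp only [phi1] at hIHj
        rw [hIHj]
        rw [getD_rep_ge _ _ _ _ (by omega), getD_rep_ge _ _ _ _ (by omega),
          getD_rep_ge _ _ _ _ (by omega)]
        congr 1
        omega

theorem phi1_run_length (m0 l : ℕ) (hl : 1 ≤ l) (n m : ℕ → ℕ)
    (hn : ∀ i < l, 1 ≤ n i) (hm : ∀ i < l - 1, 1 ≤ m i) :
    phi1 (fun x => (runWord m0 l n m).getD x 0)
      = fun x => (runWord m0 l (fun i => n i - 1) (fun i => m i - 1)).getD x 0 := by
  exact phi1_run_aux l hl m0 n m hn hm
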